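/- Let q be a prime with q ≡ 5 (mod 8). Then for every positive integer n, r(q²·n², 2x² + qy² + qz²) = 2·r(n², x² + y² + 2z²) − r(n², 2x² + qy² + qz²). -/

import Mathlib

open Matrix

noncomputable section

/-- A ternary quadratic form `a·x² + b·y² + c·z² + d·yz + e·zx + g·xy`
with integer coefficients. -/
structure TernaryQF where
  a : ℤ
  b : ℤ
  c : ℤ
  d : ℤ
  e : ℤ
  g : ℤ
deriving DecidableEq

namespace TernaryQF

/-- Evaluation of the form in any commutative ring. -/
def evalR {R : Type*} [CommRing R] (f : TernaryQF) (x y z : R) : R :=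
  (f.a : R) * x ^ 2 + (f.b : R) * y ^ 2 + (f.c : R) * z ^ 2 +
    (f.d : R) * (y * z) + (f.e : R) * (z * x) + (f.g : R) * (x * y)

def eval (f : TernaryQF) (x y z : ℤ) : ℤ := f.evalR x y z

def evalVec (f : TernaryQF) (v : Fin 3 → ℤ) : ℤ := f.eval (v 0) (v 1) (v 2)

/-- Non-classic integral: the coefficients are coprime. -/
def NonClassic (f : TernaryQF) : Prop :=
  Nat.gcd f.a.natAbs (Nat.gcd f.b.natAbs (Nat.gcd f.c.natAbs
    (Nat.gcd f.d.natAbs (Nat.gcd f.e.natAbs f.g.natAbs)))) = 1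

/-- Positive definiteness (equivalent, for a rational symmetric matrix, to
positivity of the Gram matrix). -/
def PosDefn (f : TernaryQF) : Prop :=
  ∀ x y z : ℤ, ¬(x = 0 ∧ y = 0 ∧ z = 0) → 0 < f.eval x y z

/-- `r n f`: the number of representations of `n` by `f`. -/
def r (f : TernaryQF) (n : ℤ) : ℕ :=
  Set.ncard {v : Fin 3 → ℤ | f.evalVec v = n}

/-- `4·df`, four times the discriminant (determinant of the Gram matrix), an integer. -/
def disc4 (f : TernaryQF) : ℤ :=
  4 * f.a * f.b * f.c + f.g * f.d * f.e - f.a * f.d ^ 2 - f.b * f.e ^ 2 - f.c * f.g ^ 2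

/-- `h_p(df, λ) = (p^{λ+1}-1)/(p-1) - (−4df/p)·(p^{λ}-1)/(p-1)`, written via geometric sums. -/
def hFactor (f : TernaryQF) (p lam : ℕ) : ℤ :=
  (∑ i ∈ Finset.range (lam + 1), (p : ℤ) ^ i) -
    jacobiSym (-f.disc4) p * ∑ i ∈ Finset.range lam, (p : ℤ) ^ i

/-- A (positive definite non-classic integral) ternary form is strongly s-regular if it
represents a nonzero square and the representation numbers of squares satisfy the
multiplicative formula of Cooper–Lam type. -/
def StronglySRegular (f : TernaryQF) : Prop :=
  (∃ n : ℕ, 0 < n ∧ f.r ((n : ℤ) ^ 2) ≠ 0) ∧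
    ∀ n₁ n₂ : ℕ, 0 < n₁ → 0 < n₂ →
      (∀ p : ℕ, p.Prime → p ∣ n₁ → p = 2 ∨ (p : ℤ) ∣ f.disc4) →
      Odd n₂ → IsCoprime (n₂ : ℤ) f.disc4 →
      (f.r ((n₁ : ℤ) ^ 2 * (n₂ : ℤ) ^ 2) : ℤ) =
        (f.r ((n₁ : ℤ) ^ 2) : ℤ) *
          ∏ p ∈ n₂.primeFactors, f.hFactor p (n₂.factorization p)

/-- `m_s(f)`: the minimal positive integer whose square is represented by `f`. -/
def msf (f : TernaryQF) : ℕ := sInf {n : ℕ | 0 < n ∧ f.r ((n : ℤ) ^ 2) ≠ 0}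

/-- The (rational) Gram matrix of the form. -/
def gram (f : TernaryQF) : Matrix (Fin 3) (Fin 3) ℚ :=
  !![(f.a : ℚ), (f.g : ℚ) / 2, (f.e : ℚ) / 2;
     (f.g : ℚ) / 2, (f.b : ℚ), (f.d : ℚ) / 2;
     (f.e : ℚ) / 2, (f.d : ℚ) / 2, (f.c : ℚ)]

/-- Equivalence of ternary forms over ℤ. -/
def TEquiv (f g : TernaryQF) : Prop :=
  ∃ U : Matrix (Fin 3) (Fin 3) ℤ, IsUnit U.det ∧
    (U.map ((↑) : ℤ → ℚ)).transpose * f.gram * U.map ((↑) : ℤ → ℚ) = g.gram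

/-- The Gram matrix viewed over `ℚ_p`. -/
def gramPadic (p : ℕ) [Fact p.Prime] (f : TernaryQF) : Matrix (Fin 3) (Fin 3) ℚ_[p] :=
  f.gram.map (fun x : ℚ => (x : ℚ_[p]))

/-- The coercion `ℤ_p → ℚ_p`. -/
def coeQp {p : ℕ} [Fact p.Prime] (x : ℤ_[p]) : ℚ_[p] := x

/-- Two matrices over `ℚ_p` are equivalent over `ℤ_p` if `Uᵀ A U = B` for some
`U ∈ GL₃(ℤ_p)`. -/
def EquivZp (p : ℕ) [Fact p.Prime] (A B : Matrix (Fin 3) (Fin 3) ℚ_[p]) : Prop :=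
  ∃ U : Matrix (Fin 3) (Fin 3) ℤ_[p], IsUnit U.det ∧
    (U.map coeQp).transpose * A * U.map coeQp = B

/-- Two forms lie in the same genus: locally equivalent at every (finite) prime. -/
def SameGenus (f g : TernaryQF) : Prop :=
  ∀ (p : ℕ) [Fact p.Prime], EquivZp p (gramPadic p f) (gramPadic p g)

/-- `Λ_p(f) = {v ∈ ℤ³ : f(v+z) ≡ f(z) (mod p) for all z ∈ ℤ³}`. -/
def Lam (p : ℕ) (f : TernaryQF) : Set (Fin 3 → ℤ) :=
  {v | ∀ z : Fin 3 → ℤ, (p : ℤ) ∣ (f.evalVec (v + z) - f.evalVec z)}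

/-- `g` is a Watson `λ_p`-transform of `f`: `g` is obtained by expressing `f` on a basis
of `Λ_p(f)` and dividing by the largest power of `p` dividing all values. -/
def IsWatson (p : ℕ) (f g : TernaryQF) : Prop :=
  ∃ (B : Matrix (Fin 3) (Fin 3) ℤ) (k : ℕ),
    Set.range B.mulVec = Lam p f ∧
    (∀ v : Fin 3 → ℤ, f.evalVec (B.mulVec v) = (p : ℤ) ^ k * g.evalVec v) ∧
    ¬ ∀ v : Fin 3 → ℤ, (p : ℤ) ∣ g.evalVec v

/-- The order of the (finite, for positive definite forms) integral isometry group. -/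
def autCount (f : TernaryQF) : ℕ :=
  Set.ncard {U : Matrix (Fin 3) (Fin 3) ℤ | IsUnit U.det ∧
    (U.map ((↑) : ℤ → ℚ)).transpose * f.gram * U.map ((↑) : ℤ → ℚ) = f.gram}

end TernaryQF

open TernaryQF

namespace Stmt7Aux

local notation "ℤ[i]" => GaussianInt

lemma normYZ (y z : ℤ) : Zsqrtd.norm (⟨y, z⟩ : ℤ[i]) = y ^ 2 + z ^ 2 := by
  simp [Zsqrtd.norm]; ring

lemma pair_eta (w : ℤ[i]) : (⟨w.re, w.im⟩ : ℤ[i]) = w := rfl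

lemma mdcl {R : Type*} [EuclideanDomain R] {a : R} (ha : a ≠ 0) (b : R) :
    a * b / a = b := (EuclideanDomain.eq_div_of_mul_eq_right ha rfl).symm

lemma norm_comp (w : ℤ[i]) : Zsqrtd.norm w = w.re ^ 2 + w.im ^ 2 := by
  have := normYZ w.re w.im; rwa [pair_eta] at this

set_option synthInstance.maxHeartbeats 1000000 in
lemma prime_of_norm {π : ℤ[i]} (h : Prime (Zsqrtd.norm π)) : Prime π := by
  rw [← irreducible_iff_prime]
  constructor
  · exact fun hu => h.not_unit (Int.isUnit_iff_natAbs_eq.mpr (Zsqrtd.norm_eq_one_iff.mpr hu))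
  · intro x y hxy
    have h2 := h.irreducible.isUnit_or_isUnit (by rw [hxy, Zsqrtd.norm_mul])
    exact h2.imp
      (fun hx => Zsqrtd.norm_eq_one_iff.mp (Int.isUnit_iff_natAbs_eq.mp hx))
      (fun hy => Zsqrtd.norm_eq_one_iff.mp (Int.isUnit_iff_natAbs_eq.mp hy))

lemma abs_le_of_sq_le {x N : ℤ} (h : x ^ 2 ≤ N) : -N ≤ x ∧ x ≤ N := by
  have h1 : |x| ≤ x ^ 2 := by
    rcases eq_or_ne x 0 with rfl | hx
    · simp
    · have h2 : 1 ≤ |x| := Int.one_le_abs hx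
      calc |x| = 1 * |x| := (one_mul _).symm
        _ ≤ |x| * |x| := by apply mul_le_mul_of_nonneg_right h2 (abs_nonneg x)
        _ = x ^ 2 := by rw [← abs_mul, ← sq]; exact abs_of_nonneg (sq_nonneg x)
  constructor
  · linarith [neg_abs_le x]
  · linarith [le_abs_self x]

lemma finite_diag (a b c N : ℤ) (ha : 0 < a) (hb : 0 < b) (hc : 0 < c) :
    {v : Fin 3 → ℤ | a * v 0 ^ 2 + b * v 1 ^ 2 + c * v 2 ^ 2 = N}.Finite := by
  apply Set.Finite.subset (Set.Finite.pi' (t := fun _ : Fin 3 => Set.Icc (-N) N)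
    (fun i => Set.finite_Icc _ _))
  intro v hv
  simp only [Set.mem_setOf_eq] at hv
  have k0 : v 0 ^ 2 ≤ N := by nlinarith [sq_nonneg (v 0), sq_nonneg (v 1), sq_nonneg (v 2)]
  have k1 : v 1 ^ 2 ≤ N := by nlinarith [sq_nonneg (v 0), sq_nonneg (v 1), sq_nonneg (v 2)]
  have k2 : v 2 ^ 2 ≤ N := by nlinarith [sq_nonneg (v 0), sq_nonneg (v 1), sq_nonneg (v 2)]
  intro i
  fin_cases i <;> simp only [Set.mem_Icc] <;>
    [exact abs_le_of_sq_le k0; exact abs_le_of_sq_le k1; exact abs_le_of_sq_le k2]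

/-- "g-side" vector `(w.re, w.im, u)`. -/
def toG (w : ℤ[i]) (u : ℤ) : Fin 3 → ℤ := ![w.re, w.im, u]

/-- "f-side" vector `(u, w.re, w.im)`. -/
def toF (u : ℤ) (w : ℤ[i]) : Fin 3 → ℤ := ![u, w.re, w.im]

@[simp] lemma toG0 (w : ℤ[i]) (u : ℤ) : toG w u 0 = w.re := rfl
@[simp] lemma toG1 (w : ℤ[i]) (u : ℤ) : toG w u 1 = w.im := rfl
@[simp] lemma toG2 (w : ℤ[i]) (u : ℤ) : toG w u 2 = u := rfl
@[simp] lemma toF0 (u : ℤ) (w : ℤ[i]) : toF u w 0 = u := rfl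
@[simp] lemma toF1 (u : ℤ) (w : ℤ[i]) : toF u w 1 = w.re := rfl
@[simp] lemma toF2 (u : ℤ) (w : ℤ[i]) : toF u w 2 = w.im := rfl

lemma vec_eta (v : Fin 3 → ℤ) : ![v 0, v 1, v 2] = v := by
  funext i; fin_cases i <;> rfl

open scoped Classical in
def Phi (Q : ℤ) (π : ℤ[i]) : (Fin 3 → ℤ) ⊕ (Fin 3 → ℤ) → (Fin 3 → ℤ) ⊕ (Fin 3 → ℤ)
  | .inl v =>
      if π ∣ (⟨v 1, v 2⟩ : ℤ[i]) then .inl (toG ((⟨v 1, v 2⟩ : ℤ[i]) / π) (v 0 / Q))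
      else .inr (toG ((⟨v 1, v 2⟩ : ℤ[i]) / star π) (v 0 / Q))
  | .inr v => .inr (toG (π * ⟨v 1, v 2⟩) (v 0))

open scoped Classical in
def Psi (Q : ℤ) (π : ℤ[i]) : (Fin 3 → ℤ) ⊕ (Fin 3 → ℤ) → (Fin 3 → ℤ) ⊕ (Fin 3 → ℤ)
  | .inl v => .inl (toF (Q * v 2) (π * ⟨v 0, v 1⟩))
  | .inr v =>
      if π ∣ (⟨v 0, v 1⟩ : ℤ[i]) then .inr (toF (v 2) ((⟨v 0, v 1⟩ : ℤ[i]) / π))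
      else .inl (toF (Q * v 2) (star π * ⟨v 0, v 1⟩))

/-- fibers of the `f`-side form `2x² + Q(y²+z²)`. -/
def SF (Q N : ℤ) : Set (Fin 3 → ℤ) := {v | 2 * v 0 ^ 2 + Q * v 1 ^ 2 + Q * v 2 ^ 2 = N}

/-- fibers of the `g`-side form `x² + y² + 2z²`. -/
def SG (N : ℤ) : Set (Fin 3 → ℤ) := {v | 1 * v 0 ^ 2 + 1 * v 1 ^ 2 + 2 * v 2 ^ 2 = N}

lemma mem_SF {Q N : ℤ} {v : Fin 3 → ℤ} :
    v ∈ SF Q N ↔ 2 * v 0 ^ 2 + Q * v 1 ^ 2 + Q * v 2 ^ 2 = N := Iff.rfl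

lemma mem_SG {N : ℤ} {v : Fin 3 → ℤ} :
    v ∈ SG N ↔ 1 * v 0 ^ 2 + 1 * v 1 ^ 2 + 2 * v 2 ^ 2 = N := Iff.rfl

section Main

variable {q n : ℕ} {π : ℤ[i]}

/-- The key counting identity. -/
theorem key (hq : q.Prime) (h5 : q % 8 = 5) (hπn : Zsqrtd.norm π = (q : ℤ)) :
    (SF (q : ℤ) ((q : ℤ) ^ 2 * (n : ℤ) ^ 2)).ncard + (SF (q : ℤ) ((n : ℤ) ^ 2)).ncard
      = 2 * (SG ((n : ℤ) ^ 2)).ncard := by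
  classical
  set Q : ℤ := (q : ℤ) with hQdef
  have hQprime : Prime Q := Nat.prime_iff_prime_int.mp hq
  have hq5 : 5 ≤ q := by
    rcases Nat.lt_or_ge q 5 with h | h
    · interval_cases q <;> omega
    · exact h
  have hQ3 : 3 ≤ Q := by rw [hQdef]; exact_mod_cast (by omega : 3 ≤ q)
  have hQ0 : Q ≠ 0 := by omega
  have hπp : Prime π := prime_of_norm (hπn ▸ hQprime)
  have hπ0 : π ≠ 0 := hπp.ne_zero
  have hπ'n : Zsqrtd.norm (star π) = Q := by rw [Zsqrtd.norm_conj, hπn]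
  have hπ'p : Prime (star π) := prime_of_norm (hπ'n ▸ hQprime)
  have hπ'0 : star π ≠ 0 := hπ'p.ne_zero
  have hmul : π * star π = (Q : ℤ[i]) := by
    rw [← Zsqrtd.norm_eq_mul_conj, hπn]
  -- π does not divide its conjugate
  have hndvd : ¬ π ∣ star π := by
    intro hdvd
    have hcop : IsCoprime π.re π.im := by
      rw [Int.isCoprime_iff_gcd_eq_one]
      by_contra hg
      obtain ⟨p, hp, hpa, hpb⟩ :=
        Nat.Prime.not_coprime_iff_dvd.mp (by rwa [Int.gcd] at hg)
      have hp2 : (p : ℤ) ^ 2 ∣ Q := by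
        rw [← hπn, norm_comp]
        have h1 : (p : ℤ) ∣ π.re := Int.dvd_natAbs.mp (Int.natCast_dvd_natCast.mpr hpa)
        have h2 : (p : ℤ) ∣ π.im := Int.dvd_natAbs.mp (Int.natCast_dvd_natCast.mpr hpb)
        exact dvd_add (pow_dvd_pow_of_dvd h1 2) (pow_dvd_pow_of_dvd h2 2)
      have hpq : (p : ℤ) ∣ Q := dvd_trans (dvd_pow_self _ (by norm_num)) hp2
      have hpq' : p ∣ q := by
        have : (p:ℤ) ∣ (q:ℤ) := by rwa [hQdef] at hpq
        exact_mod_cast this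
      have hpQ : p = q := (Nat.prime_dvd_prime_iff_eq hp hq).mp hpq'
      subst hpQ
      have := Int.le_of_dvd (by positivity) hp2
      nlinarith [hQ3]
    obtain ⟨s, t, hst⟩ := hcop
    have h2A : π ∣ (⟨2 * π.re, 0⟩ : ℤ[i]) := by
      have he : (⟨2 * π.re, 0⟩ : ℤ[i]) = π + star π := by
        ext <;> simp [Zsqrtd.re_star, Zsqrtd.im_star] <;> ring
      rw [he]; exact dvd_add dvd_rfl hdvd
    have h2B : π ∣ (⟨2 * π.im, 0⟩ : ℤ[i]) := by
      have he : (⟨2 * π.im, 0⟩ : ℤ[i]) = (π - star π) * ⟨0, -1⟩ := by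
        ext <;> simp [Zsqrtd.re_mul, Zsqrtd.im_mul, Zsqrtd.re_star, Zsqrtd.im_star] <;> ring
      rw [he]; exact Dvd.dvd.mul_right (dvd_sub dvd_rfl hdvd) _
    have h2 : π ∣ (⟨2, 0⟩ : ℤ[i]) := by
      have he : (⟨2, 0⟩ : ℤ[i]) = ⟨2 * π.re, 0⟩ * ⟨s, 0⟩ + ⟨2 * π.im, 0⟩ * ⟨t, 0⟩ := by
        ext <;> simp [Zsqrtd.re_mul, Zsqrtd.im_mul] <;> linear_combination -2 * hst
      rw [he]; exact dvd_add (h2A.mul_right _) (h2B.mul_right _)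
    obtain ⟨c, hc⟩ := h2
    have h4 : Q ∣ 4 := by
      have : Zsqrtd.norm (⟨2, 0⟩ : ℤ[i]) = Q * Zsqrtd.norm c := by
        rw [hc, Zsqrtd.norm_mul, hπn]
      rw [normYZ] at this
      exact ⟨Zsqrtd.norm c, by linarith⟩
    have h2' : Q ∣ 2 := hQprime.dvd_of_dvd_pow (show Q ∣ 2 ^ 2 by norm_num; exact h4)
    have := Int.le_of_dvd (by norm_num) h2'
    omega
  -- helper: exact division facts
  have star_dvd_of_q_dvd_norm : ∀ w : ℤ[i], ¬ π ∣ w → Q ∣ Zsqrtd.norm w → star π ∣ w := by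
    intro w hnd hQn
    obtain ⟨c, hc⟩ := hQn
    have hdd : π ∣ w * star w := by
      have : w * star w = (Q : ℤ[i]) * (c : ℤ[i]) := by
        rw [← Zsqrtd.norm_eq_mul_conj, hc]; push_cast; ring
      rw [this, ← hmul]
      exact Dvd.dvd.mul_right (Dvd.intro _ rfl) _
    rcases hπp.dvd_mul.mp hdd with h | h
    · exact absurd h hnd
    · obtain ⟨d, hd⟩ := h
      refine ⟨star d, ?_⟩
      calc w = star (star w) := (star_star w).symm
        _ = star (π * d) := by rw [hd]
        _ = star π * star d := by rw [star_mul']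
  -- the sets
  set SA := SF Q (Q ^ 2 * (n : ℤ) ^ 2) with hSA
  set SB := SF Q ((n : ℤ) ^ 2) with hSB
  set SC := SG ((n : ℤ) ^ 2) with hSC
  set U : Set ((Fin 3 → ℤ) ⊕ (Fin 3 → ℤ)) := Sum.inl '' SA ∪ Sum.inr '' SB with hU
  set T : Set ((Fin 3 → ℤ) ⊕ (Fin 3 → ℤ)) := Sum.inl '' SC ∪ Sum.inr '' SC with hT
  -- divisibility of the first coordinate on SA
  have hdvd0 : ∀ v ∈ SA, Q ∣ v 0 := by
    intro v hv
    rw [hSA, mem_SF] at hv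
    have h1 : Q ∣ 2 * v 0 ^ 2 := ⟨Q * (n : ℤ) ^ 2 - v 1 ^ 2 - v 2 ^ 2, by linear_combination hv⟩
    rcases hQprime.dvd_mul.mp h1 with h | h
    · have := Int.le_of_dvd (by norm_num) h; omega
    · exact hQprime.dvd_of_dvd_pow h
  -- norm on SA fibers
  have hnormA : ∀ v ∈ SA, ∀ u : ℤ, v 0 = Q * u →
      Zsqrtd.norm (⟨v 1, v 2⟩ : ℤ[i]) = Q * ((n : ℤ) ^ 2 - 2 * u ^ 2) := by
    intro v hv u hu
    rw [hSA, mem_SF] at hv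
    rw [normYZ]
    apply mul_left_cancel₀ hQ0
    rw [hu] at hv; linear_combination hv
  -- maps-to for Phi
  have mapsPhi : Set.MapsTo (Phi Q π) U T := by
    rintro x (⟨v, hv, rfl⟩ | ⟨v, hv, rfl⟩)
    · obtain ⟨u, hu⟩ := hdvd0 v hv
      have hnw := hnormA v hv u hu
      set w : ℤ[i] := ⟨v 1, v 2⟩ with hw
      have hvu : v 0 / Q = u := by rw [hu, Int.mul_ediv_cancel_left _ hQ0]
      by_cases hd : π ∣ w
      · have hwp : π * (w / π) = w := EuclideanDomain.mul_div_cancel' hπ0 hd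
        have hn2 : Zsqrtd.norm (w / π) = (n : ℤ) ^ 2 - 2 * u ^ 2 := by
          apply mul_left_cancel₀ hQ0
          have hh : Zsqrtd.norm w = Zsqrtd.norm π * Zsqrtd.norm (w / π) := by
            rw [← Zsqrtd.norm_mul, hwp]
          rw [hπn] at hh; linarith [hnw]
        have : Phi Q π (Sum.inl v) = Sum.inl (toG (w / π) (v 0 / Q)) := by
          simp only [Phi, toG0, toG1, toG2, toF0, toF1, toF2, pair_eta]; rw [if_pos hd]
        rw [this]
        left
        refine ⟨toG (w / π) (v 0 / Q), ?_, rfl⟩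
        rw [hSC, mem_SG]
        simp only [toG0, toG1, toG2, hvu]
        have hc := norm_comp (w / π)
        rw [hn2] at hc; linarith
      · have hsd : star π ∣ w := star_dvd_of_q_dvd_norm w hd ⟨_, hnw⟩
        have hwp : star π * (w / star π) = w := EuclideanDomain.mul_div_cancel' hπ'0 hsd
        have hn2 : Zsqrtd.norm (w / star π) = (n : ℤ) ^ 2 - 2 * u ^ 2 := by
          apply mul_left_cancel₀ hQ0
          have hh : Zsqrtd.norm w = Zsqrtd.norm (star π) * Zsqrtd.norm (w / star π) := by
            rw [← Zsqrtd.norm_mul, hwp]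
          rw [hπ'n] at hh; linarith [hnw]
        have : Phi Q π (Sum.inl v) = Sum.inr (toG (w / star π) (v 0 / Q)) := by
          simp only [Phi, toG0, toG1, toG2, toF0, toF1, toF2, pair_eta]; rw [if_neg hd]
        rw [this]
        right
        refine ⟨toG (w / star π) (v 0 / Q), ?_, rfl⟩
        rw [hSC, mem_SG]
        simp only [toG0, toG1, toG2, hvu]
        have hc := norm_comp (w / star π)
        rw [hn2] at hc; linarith
    · rw [hSB, mem_SF] at hv
      have hnw : Zsqrtd.norm (π * ⟨v 1, v 2⟩) = (n : ℤ) ^ 2 - 2 * v 0 ^ 2 := by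
        rw [Zsqrtd.norm_mul, hπn, normYZ]; linarith
      have hc := norm_comp (π * ⟨v 1, v 2⟩)
      rw [hnw] at hc
      have h1 : Phi Q π (Sum.inr v) = Sum.inr (toG (π * ⟨v 1, v 2⟩) (v 0)) := by
        simp only [Phi, toG0, toG1, toG2, toF0, toF1, toF2, pair_eta]
      rw [h1]
      right
      refine ⟨toG (π * ⟨v 1, v 2⟩) (v 0), ?_, rfl⟩
      rw [hSC, mem_SG]
      simp only [toG0, toG1, toG2]
      linarith
  -- maps-to for Psi
  have mapsPsi : Set.MapsTo (Psi Q π) T U := by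
    rintro x (⟨v, hv, rfl⟩ | ⟨v, hv, rfl⟩)
    · rw [hSC, mem_SG] at hv
      have hnw : Zsqrtd.norm (π * ⟨v 0, v 1⟩) = Q * (v 0 ^ 2 + v 1 ^ 2) := by
        rw [Zsqrtd.norm_mul, hπn, normYZ]
      have hc := norm_comp (π * ⟨v 0, v 1⟩)
      rw [hnw] at hc
      have h1 : Psi Q π (Sum.inl v) = Sum.inl (toF (Q * v 2) (π * ⟨v 0, v 1⟩)) := by
        simp only [Psi, toG0, toG1, toG2, toF0, toF1, toF2, pair_eta]
      rw [h1]
      left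
      refine ⟨toF (Q * v 2) (π * ⟨v 0, v 1⟩), ?_, rfl⟩
      rw [hSA, mem_SF]
      simp only [toF0, toF1, toF2]
      linear_combination Q ^ 2 * hv - Q * hc
    · rw [hSC, mem_SG] at hv
      set z : ℤ[i] := ⟨v 0, v 1⟩ with hz
      by_cases hd : π ∣ z
      · have hwp : π * (z / π) = z := EuclideanDomain.mul_div_cancel' hπ0 hd
        have hn2 : Q * Zsqrtd.norm (z / π) = v 0 ^ 2 + v 1 ^ 2 := by
          have hh : Zsqrtd.norm z = Zsqrtd.norm π * Zsqrtd.norm (z / π) := by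
            rw [← Zsqrtd.norm_mul, hwp]
          rw [hπn, normYZ] at hh; linarith
        have : Psi Q π (Sum.inr v) = Sum.inr (toF (v 2) (z / π)) := by
          simp only [Psi, toG0, toG1, toG2, toF0, toF1, toF2, pair_eta]; rw [if_pos hd]
        rw [this]
        right
        refine ⟨toF (v 2) (z / π), ?_, rfl⟩
        rw [hSB, mem_SF]
        simp only [toF0, toF1, toF2]
        have hc := norm_comp (z / π)
        rw [hc] at hn2; linarith
      · have : Psi Q π (Sum.inr v) = Sum.inl (toF (Q * v 2) (star π * z)) := by
          simp only [Psi, toG0, toG1, toG2, toF0, toF1, toF2, pair_eta]; rw [if_neg hd]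
        rw [this]
        left
        refine ⟨toF (Q * v 2) (star π * z), ?_, rfl⟩
        rw [hSA, mem_SF]
        simp only [toF0, toF1, toF2]
        have hnw : Zsqrtd.norm (star π * z) = Q * (v 0 ^ 2 + v 1 ^ 2) := by
          rw [Zsqrtd.norm_mul, hπ'n, hz, normYZ]
        have hc := norm_comp (star π * z)
        rw [hnw] at hc
        linear_combination Q ^ 2 * hv - Q * hc
  -- left inverse
  have hleft : Set.LeftInvOn (Psi Q π) (Phi Q π) U := by
    rintro x (⟨v, hv, rfl⟩ | ⟨v, hv, rfl⟩)
    · obtain ⟨u, hu⟩ := hdvd0 v hv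
      set w : ℤ[i] := ⟨v 1, v 2⟩ with hw
      have hQu : Q * (v 0 / Q) = v 0 := Int.mul_ediv_cancel' ⟨u, hu⟩
      have hveq : toF (v 0) w = v := by rw [toF, hw]; exact vec_eta v
      by_cases hd : π ∣ w
      · have hwp : π * (w / π) = w := EuclideanDomain.mul_div_cancel' hπ0 hd
        have h1 : Phi Q π (Sum.inl v) = Sum.inl (toG (w / π) (v 0 / Q)) := by
          simp only [Phi, toG0, toG1, toG2, toF0, toF1, toF2, pair_eta]
          rw [if_pos hd]
        have h2 : Psi Q π (Sum.inl (toG (w / π) (v 0 / Q))) = Sum.inl (toF (v 0) w) := by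
          simp only [Psi, toG0, toG1, toG2, toF0, toF1, toF2, pair_eta]
          rw [hwp, hQu]
        rw [h1, h2, hveq]
      · have hsd : star π ∣ w := star_dvd_of_q_dvd_norm w hd ⟨_, hnormA v hv u hu⟩
        have hwp : star π * (w / star π) = w := EuclideanDomain.mul_div_cancel' hπ'0 hsd
        have hnd2 : ¬ π ∣ (w / star π) := fun hcon => hd (by rw [← hwp]; exact hcon.mul_left _)
        have h1 : Phi Q π (Sum.inl v) = Sum.inr (toG (w / star π) (v 0 / Q)) := by
          simp only [Phi, toG0, toG1, toG2, toF0, toF1, toF2, pair_eta]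
          rw [if_neg hd]
        have h2 : Psi Q π (Sum.inr (toG (w / star π) (v 0 / Q))) = Sum.inl (toF (v 0) w) := by
          simp only [Psi, toG0, toG1, toG2, toF0, toF1, toF2, pair_eta]
          simp only [hnd2, ↓reduceIte]
          rw [hwp, hQu]
        rw [h1, h2, hveq]
    · set w : ℤ[i] := ⟨v 1, v 2⟩ with hw
      have hveq : toF (v 0) w = v := by rw [toF, hw]; exact vec_eta v
      have h1 : Phi Q π (Sum.inr v) = Sum.inr (toG (π * w) (v 0)) := by
        simp only [Phi, toG0, toG1, toG2, toF0, toF1, toF2, pair_eta]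
        rfl
      have hd : π ∣ π * w := Dvd.intro _ rfl
      have h2 : Psi Q π (Sum.inr (toG (π * w) (v 0))) = Sum.inr (toF (v 0) w) := by
        simp only [Psi, toG0, toG1, toG2, toF0, toF1, toF2, pair_eta]
        simp only [hd, ↓reduceIte]
        rw [mdcl hπ0]
      rw [h1, h2, hveq]
  -- right inverse
  have hright : Set.RightInvOn (Psi Q π) (Phi Q π) T := by
    rintro x (⟨v, hv, rfl⟩ | ⟨v, hv, rfl⟩)
    · set z : ℤ[i] := ⟨v 0, v 1⟩ with hz
      have hveq : toG z (v 2) = v := by rw [toG, hz]; exact vec_eta v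
      have h1 : Psi Q π (Sum.inl v) = Sum.inl (toF (Q * v 2) (π * z)) := by
        simp only [Psi, toG0, toG1, toG2, toF0, toF1, toF2, pair_eta]
        rfl
      have hd : π ∣ π * z := Dvd.intro _ rfl
      have h2 : Phi Q π (Sum.inl (toF (Q * v 2) (π * z))) = Sum.inl (toG z (v 2)) := by
        simp only [Phi, toG0, toG1, toG2, toF0, toF1, toF2, pair_eta]
        simp only [hd, ↓reduceIte]
        rw [mdcl hπ0, Int.mul_ediv_cancel_left _ hQ0]
      rw [h1, h2, hveq]
    · set z : ℤ[i] := ⟨v 0, v 1⟩ with hz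
      have hveq : toG z (v 2) = v := by rw [toG, hz]; exact vec_eta v
      by_cases hd : π ∣ z
      · have h1 : Psi Q π (Sum.inr v) = Sum.inr (toF (v 2) (z / π)) := by
          simp only [Psi, toG0, toG1, toG2, toF0, toF1, toF2, pair_eta]
          rw [if_pos hd]
        have h2 : Phi Q π (Sum.inr (toF (v 2) (z / π))) = Sum.inr (toG z (v 2)) := by
          simp only [Phi, toG0, toG1, toG2, toF0, toF1, toF2, pair_eta]
          rw [EuclideanDomain.mul_div_cancel' hπ0 hd]
        rw [h1, h2, hveq]
      · have hnd2 : ¬ π ∣ (star π * z) := by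
          intro hcon
          rcases hπp.dvd_mul.mp hcon with h | h
          · exact hndvd h
          · exact hd h
        have h1 : Psi Q π (Sum.inr v) = Sum.inl (toF (Q * v 2) (star π * z)) := by
          simp only [Psi, toG0, toG1, toG2, toF0, toF1, toF2, pair_eta]
          rw [if_neg hd]
        have h2 : Phi Q π (Sum.inl (toF (Q * v 2) (star π * z))) = Sum.inr (toG z (v 2)) := by
          simp only [Phi, toG0, toG1, toG2, toF0, toF1, toF2, pair_eta]
          simp only [hnd2, ↓reduceIte]
          rw [mdcl hπ'0, Int.mul_ediv_cancel_left _ hQ0]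
        rw [h1, h2, hveq]
  -- the bijection and cardinalities
  have hbij : Set.BijOn (Phi Q π) U T := Set.InvOn.bijOn ⟨hleft, hright⟩ mapsPhi mapsPsi
  have hcard : T.ncard = U.ncard := by
    rw [← hbij.image_eq]
    exact Set.ncard_image_of_injOn hbij.injOn
  have hQpos : (0 : ℤ) < Q := by omega
  have hfinA : SA.Finite := finite_diag 2 Q Q _ (by norm_num) hQpos hQpos
  have hfinB : SB.Finite := finite_diag 2 Q Q _ (by norm_num) hQpos hQpos
  have hfinC : SC.Finite := finite_diag 1 1 2 _ one_pos one_pos (by norm_num)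
  have hdisj : ∀ s t : Set (Fin 3 → ℤ),
      Disjoint (Sum.inl '' s : Set ((Fin 3 → ℤ) ⊕ (Fin 3 → ℤ))) (Sum.inr '' t) := by
    intro s t
    rw [Set.disjoint_left]
    rintro x ⟨a, _, rfl⟩ ⟨b, _, hb⟩
    exact Sum.inl_ne_inr hb.symm
  have hUcard : U.ncard = SA.ncard + SB.ncard := by
    rw [hU, Set.ncard_union_eq (hdisj _ _) (hfinA.image _) (hfinB.image _),
      Set.ncard_image_of_injective _ Sum.inl_injective,
      Set.ncard_image_of_injective _ Sum.inr_injective]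
  have hTcard : T.ncard = SC.ncard + SC.ncard := by
    rw [hT, Set.ncard_union_eq (hdisj _ _) (hfinC.image _) (hfinC.image _),
      Set.ncard_image_of_injective _ Sum.inl_injective,
      Set.ncard_image_of_injective _ Sum.inr_injective]
  omega

end Main

end Stmt7Aux


/-- for `q ≡ 5 (mod 8)` prime,
`r(q²n², 2x²+qy²+qz²) = 2·r(n², x²+y²+2z²) − r(n², 2x²+qy²+qz²)`. -/
theorem stmt7 (q : ℕ) (hq : q.Prime) (h5 : q % 8 = 5) (n : ℕ) (hn : 0 < n) :
    ((TernaryQF.mk 2 q q 0 0 0).r ((q : ℤ) ^ 2 * (n : ℤ) ^ 2) : ℤ) =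
      2 * ((TernaryQF.mk 1 1 2 0 0 0).r ((n : ℤ) ^ 2) : ℤ) -
        ((TernaryQF.mk 2 q q 0 0 0).r ((n : ℤ) ^ 2) : ℤ) := by
  classical
  haveI : Fact q.Prime := ⟨hq⟩
  obtain ⟨A, B, hAB⟩ := Nat.Prime.sq_add_sq (by omega : q % 4 ≠ 3)
  set π : GaussianInt := ⟨(A : ℤ), (B : ℤ)⟩ with hπ
  have hπn : Zsqrtd.norm π = (q : ℤ) := by
    rw [hπ, Stmt7Aux.normYZ]; exact_mod_cast hAB
  have hkey := Stmt7Aux.key (n := n) hq h5 hπn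
  have eA : {v : Fin 3 → ℤ | (TernaryQF.mk 2 q q 0 0 0).evalVec v = (q : ℤ) ^ 2 * (n : ℤ) ^ 2}
      = Stmt7Aux.SF (q : ℤ) ((q : ℤ) ^ 2 * (n : ℤ) ^ 2) := by
    ext v
    simp only [Stmt7Aux.SF, Set.mem_setOf_eq, TernaryQF.evalVec, TernaryQF.eval,
      TernaryQF.evalR, Int.cast_id]
    constructor <;> intro h <;> linarith
  have eB : {v : Fin 3 → ℤ | (TernaryQF.mk 2 q q 0 0 0).evalVec v = (n : ℤ) ^ 2}
      = Stmt7Aux.SF (q : ℤ) ((n : ℤ) ^ 2) := by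
    ext v
    simp only [Stmt7Aux.SF, Set.mem_setOf_eq, TernaryQF.evalVec, TernaryQF.eval,
      TernaryQF.evalR, Int.cast_id]
    constructor <;> intro h <;> linarith
  have eC : {v : Fin 3 → ℤ | (TernaryQF.mk 1 1 2 0 0 0).evalVec v = (n : ℤ) ^ 2}
      = Stmt7Aux.SG ((n : ℤ) ^ 2) := by
    ext v
    simp only [Stmt7Aux.SG, Set.mem_setOf_eq, TernaryQF.evalVec, TernaryQF.eval,
      TernaryQF.evalR, Int.cast_id]
    constructor <;> intro h <;> linarith
  have rA : (TernaryQF.mk 2 q q 0 0 0).r ((q : ℤ) ^ 2 * (n : ℤ) ^ 2)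
      = (Stmt7Aux.SF (q : ℤ) ((q : ℤ) ^ 2 * (n : ℤ) ^ 2)).ncard := by
    rw [TernaryQF.r, eA]
  have rB : (TernaryQF.mk 2 q q 0 0 0).r ((n : ℤ) ^ 2)
      = (Stmt7Aux.SF (q : ℤ) ((n : ℤ) ^ 2)).ncard := by
    rw [TernaryQF.r, eB]
  have rC : (TernaryQF.mk 1 1 2 0 0 0).r ((n : ℤ) ^ 2)
      = (Stmt7Aux.SG ((n : ℤ) ^ 2)).ncard := by
    rw [TernaryQF.r, eC]
  rw [rA, rB, rC]
  omega
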